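/- arXiv:2002.08091 — 4 statements merged into one kernel-verified Lean document; each statement's English description precedes it below -/
import Mathlib

section
/- Let G : X × X → [0,∞] satisfy G > 0, G(x,x) = ∞, and the triangle property with constant C ≥ 1: min(G(x,z), G(y,z)) ≤ C·G(x,y) for all x,y,z. Define ρ(x,y) = 1/G(x,y) + 1/G(y,x) (with 1/∞ = 0). Then ρ is a quasi-metric: ρ(x,y) = ρ(y,x), ρ(x,x) = 0, and there exists C' > 0 such that ρ(x,y) ≤ C'·(ρ(x,z) + ρ(z,y)) for all x, y, z. -/
open scoped ENNReal

theorem stmt_3 {X : Type*} (G : X → X → ℝ≥0∞) (hpos : ∀ x y, 0 < G x y)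
    (hdiag : ∀ x, G x x = ∞) (C : ℝ≥0∞) (hC : 1 ≤ C) (hCfin : C ≠ ∞)
    (htri : ∀ x y z : X, min (G x z) (G y z) ≤ C * G x y) :
    (∀ x y : X, (G x y)⁻¹ + (G y x)⁻¹ = (G y x)⁻¹ + (G x y)⁻¹) ∧
    (∀ x : X, (G x x)⁻¹ + (G x x)⁻¹ = 0) ∧
    ∃ C' : ℝ≥0∞, 0 < C' ∧ C' ≠ ∞ ∧
      ∀ x y z : X, (G x y)⁻¹ + (G y x)⁻¹ ≤
        C' * (((G x z)⁻¹ + (G z x)⁻¹) + ((G z y)⁻¹ + (G y z)⁻¹)) := by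
  have hC0 : C ≠ 0 := by
    intro h; rw [h] at hC; exact absurd hC (by simp)
  have key : ∀ x y z : X, (G x y)⁻¹ ≤ C * ((G x z)⁻¹ + (G y z)⁻¹) := by
    intro x y z
    have h := htri x y z
    have hinv : (C * G x y)⁻¹ ≤ (min (G x z) (G y z))⁻¹ :=
      ENNReal.inv_le_inv.mpr h
    have hmin : (min (G x z) (G y z))⁻¹ ≤ (G x z)⁻¹ + (G y z)⁻¹ := by
      rcases min_cases (G x z) (G y z) with ⟨he, _⟩ | ⟨he, _⟩ <;> rw [he]
      · exact le_self_add
      · exact le_add_self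
    have heq : (G x y)⁻¹ = C * (C * G x y)⁻¹ := by
      rw [ENNReal.mul_inv (Or.inl hC0) (Or.inl hCfin), ← mul_assoc,
        ENNReal.mul_inv_cancel hC0 hCfin, one_mul]
    calc (G x y)⁻¹ = C * (C * G x y)⁻¹ := heq
      _ ≤ C * ((G x z)⁻¹ + (G y z)⁻¹) :=
          mul_le_mul_right (hinv.trans hmin) C
  refine ⟨fun x y => add_comm _ _, fun x => by simp [hdiag x], 2 * C, ?_, ?_, ?_⟩
  · exact ENNReal.mul_pos (by norm_num) hC0
  · exact ENNReal.mul_ne_top (by norm_num) hCfin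
  · intro x y z
    have h1 := key x y z
    have h2 := key y x z
    have hb : (G x y)⁻¹ + (G y x)⁻¹ ≤ 2 * C * ((G x z)⁻¹ + (G y z)⁻¹) := by
      calc (G x y)⁻¹ + (G y x)⁻¹
          ≤ C * ((G x z)⁻¹ + (G y z)⁻¹) + C * ((G y z)⁻¹ + (G x z)⁻¹) :=
            add_le_add h1 h2
        _ = 2 * C * ((G x z)⁻¹ + (G y z)⁻¹) := by ring_nf
    refine hb.trans (mul_le_mul_right ?_ _)
    exact add_le_add le_self_add le_add_self
end

section
/- Let (X,d) be a separable metric space, γ > 0, G(x,y) = d(x,y)^{-γ}. Let A ⊆ X be a nonempty closed set, A_0 ⊆ A a Borel set dense in A, and μ a finite Borel measure on X with μ(A) = 0. Then there exists a finite Borel measure ν supported on A_0 such that ‖ν‖ = ‖μ‖ and Gν(x) ≥ 3^{-γ}·Gμ(x) for every x ∈ A. -/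
open MeasureTheory
open scoped ENNReal

theorem stmt_10 {X : Type*} [MetricSpace X] [TopologicalSpace.SeparableSpace X]
    [MeasurableSpace X] [BorelSpace X]
    (γ : ℝ) (hγ : 0 < γ) (A A₀ : Set X) (hA : IsClosed A) (hne : A.Nonempty)
    (hA₀m : MeasurableSet A₀) (hsub : A₀ ⊆ A) (hdense : A ⊆ closure A₀)
    (μ : Measure X) [IsFiniteMeasure μ] (hμA : μ A = 0) :
    ∃ ν : Measure X, IsFiniteMeasure ν ∧ ν A₀ᶜ = 0 ∧ ν Set.univ = μ Set.univ ∧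
      ∀ x ∈ A, (3 : ℝ≥0∞) ^ (-γ) * ∫⁻ y, (edist x y) ^ (-γ) ∂μ ≤
        ∫⁻ y, (edist x y) ^ (-γ) ∂ν := by
  classical
  -- countable dense subset of A₀
  obtain ⟨t, hts, htc, htd⟩ :=
    (TopologicalSpace.IsSeparable.of_separableSpace A₀).exists_countable_dense_subset
  have hclt : closure t = A := by
    apply le_antisymm
    · exact hA.closure_subset_iff.2 (hts.trans hsub)
    · intro x hx
      have := closure_mono htd (hdense hx)
      rwa [closure_closure] at this
  have htne : t.Nonempty := by
    rcases hne with ⟨a, ha⟩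
    by_contra h
    rw [Set.not_nonempty_iff_eq_empty] at h
    rw [h, closure_empty] at hclt
    rw [← hclt] at ha
    exact ha
  obtain ⟨e, he⟩ := htc.exists_eq_range htne
  have het : ∀ n, e n ∈ t := fun n => he ▸ Set.mem_range_self n
  -- the predicate and selection function
  set P : X → ℕ → Prop := fun y n => dist y (e n) < 2 * Metric.infDist y A with hP
  have hPex : ∀ y ∉ A, ∃ n, P y n := by
    intro y hy
    have h0 : 0 < Metric.infDist y A := by
      exact (hA.notMem_iff_infDist_pos hne).1 hy
    have : Metric.infDist y t < 2 * Metric.infDist y A := by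
      rw [← Metric.infDist_closure, hclt]; linarith
    obtain ⟨z, hzt, hz⟩ := (Metric.infDist_lt_iff htne).1 this
    rw [he] at hzt
    obtain ⟨n, rfl⟩ := hzt
    exact ⟨n, hz⟩
  let g : X → ℕ := fun y => if h : ∃ n, P y n then Nat.find h else 0
  let f : X → X := fun y => e (g y)
  have hPmeas : ∀ n, MeasurableSet {y | P y n} := by
    intro n
    have : IsOpen {y | P y n} := by
      apply isOpen_lt
      · exact Continuous.dist continuous_id continuous_const
      · exact continuous_const.mul (Metric.continuous_infDist_pt A)
    exact this.measurableSet
  have hg : Measurable g := by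
    apply measurable_to_countable'
    intro n
    have : g ⁻¹' {n} = ({y | P y n} ∩ ⋂ m < n, {y | P y m}ᶜ) ∪
        (if n = 0 then {y | ∀ m, ¬ P y m} else ∅) := by
      ext y
      simp only [Set.mem_preimage, Set.mem_singleton_iff, Set.mem_union, Set.mem_inter_iff,
        Set.mem_iInter, Set.mem_compl_iff, Set.mem_setOf_eq, g]
      constructor
      · intro hgy
        by_cases h : ∃ m, P y m
        · rw [dif_pos h] at hgy
          left
          rw [Nat.find_eq_iff h] at hgy
          exact ⟨hgy.1, hgy.2⟩
        · rw [dif_neg h] at hgy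
          right
          subst hgy
          simp only [if_true]
          exact not_exists.1 h
      · intro h
        rcases h with ⟨h1, h2⟩ | h
        · have hex : ∃ m, P y m := ⟨n, h1⟩
          rw [dif_pos hex, Nat.find_eq_iff hex]
          exact ⟨h1, h2⟩
        · by_cases hn : n = 0
          · rw [if_pos hn] at h
            rw [dif_neg (not_exists.2 h), hn]
          · rw [if_neg hn] at h
            exact absurd h (Set.notMem_empty y)
    rw [this]
    apply MeasurableSet.union
    · exact (hPmeas n).inter (MeasurableSet.iInter fun m => MeasurableSet.iInter
        fun _ => (hPmeas m).compl)
    · split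
      · have : {y : X | ∀ m, ¬ P y m} = ⋂ m, {y | P y m}ᶜ := by ext y; simp
        rw [this]
        exact MeasurableSet.iInter fun m => (hPmeas m).compl
      · exact MeasurableSet.empty
  have hf : Measurable f := measurable_from_top.comp hg
  have hft : ∀ y, f y ∈ t := fun y => het _
  have hkey : ∀ y ∉ A, dist y (f y) < 2 * Metric.infDist y A := by
    intro y hy
    have h := hPex y hy
    simp only [f, g, dif_pos h]
    exact Nat.find_spec h
  refine ⟨μ.map f, ?_, ?_, ?_, ?_⟩
  · exact μ.isFiniteMeasure_map f
  · rw [Measure.map_apply hf hA₀m.compl]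
    have : f ⁻¹' A₀ᶜ = ∅ := by
      ext y
      simp only [Set.mem_preimage, Set.mem_compl_iff, Set.mem_empty_iff_false, iff_false,
        not_not]
      exact hts (hft y)
    rw [this, measure_empty]
  · rw [Measure.map_apply hf MeasurableSet.univ, Set.preimage_univ]
  · intro x hx
    have hmeasG : Measurable fun y => (edist x y) ^ (-γ) :=
      ((continuous_const.edist continuous_id).measurable).pow_const _
    rw [lintegral_map hmeasG hf, ← lintegral_const_mul _ hmeasG]
    apply lintegral_mono_ae
    have hAc : ∀ᵐ y ∂μ, y ∉ A := by
      rw [ae_iff]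
      simpa using hμA
    filter_upwards [hAc] with y hy
    have hd : edist x (f y) ≤ 3 * edist x y := by
      have h1 : dist x (f y) ≤ dist x y + dist y (f y) := dist_triangle x y (f y)
      have h2 : dist y (f y) ≤ 2 * Metric.infDist y A := (hkey y hy).le
      have h3 : Metric.infDist y A ≤ dist y x := Metric.infDist_le_dist_of_mem hx
      have : dist x (f y) ≤ 3 * dist x y := by
        rw [dist_comm y x] at h3; linarith
      rw [edist_dist, edist_dist, ← ENNReal.ofReal_ofNat,
        ← ENNReal.ofReal_mul (by norm_num)]
      exact ENNReal.ofReal_le_ofReal this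
    calc (3 : ℝ≥0∞) ^ (-γ) * edist x y ^ (-γ)
        = (3 * edist x y) ^ (-γ) := by
          rw [ENNReal.mul_rpow_of_ne_top (by norm_num) (edist_ne_top x y)]
      _ ≤ edist x (f y) ^ (-γ) := by
          rw [ENNReal.rpow_neg, ENNReal.rpow_neg]
          exact ENNReal.inv_le_inv.2 (ENNReal.rpow_le_rpow hd hγ.le)
end

section
/- Let (X,d) be a separable metric space, γ > 0, G(x,y) = d(x,y)^{-γ}. Let A ⊆ X be a nonempty closed set and μ a finite Borel measure on X. Then there exists a finite Borel measure ν supported on A such that ‖ν‖ = ‖μ‖ and Gν ≥ 3^{-γ}·Gμ on A. -/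
open MeasureTheory
open scoped ENNReal

-- key pointwise lemma
lemma key_rpow {γ : ℝ} (hγ : 0 < γ) {a b : ℝ≥0∞} (hb : b ≠ ⊤) (h : a ≤ 3 * b) :
    (3 : ℝ≥0∞) ^ (-γ) * b ^ (-γ) ≤ a ^ (-γ) := by
  rcases eq_or_ne b 0 with rfl | hb0
  · have : a ^ (-γ) = ⊤ := by
      have ha : a = 0 := le_antisymm (by simpa using h) (zero_le)
      rw [ha, ENNReal.zero_rpow_of_neg (by linarith)]
    simp [this]
  · rw [← ENNReal.mul_rpow_of_ne_zero (by norm_num) hb0]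
    rw [ENNReal.rpow_neg, ENNReal.rpow_neg]
    apply ENNReal.inv_le_inv.2
    exact ENNReal.rpow_le_rpow h hγ.le

theorem stmt_11 {X : Type*} [MetricSpace X] [TopologicalSpace.SeparableSpace X]
    [MeasurableSpace X] [BorelSpace X]
    (γ : ℝ) (hγ : 0 < γ) (A : Set X) (hA : IsClosed A) (hne : A.Nonempty)
    (μ : Measure X) [IsFiniteMeasure μ] :
    ∃ ν : Measure X, IsFiniteMeasure ν ∧ ν Aᶜ = 0 ∧ ν Set.univ = μ Set.univ ∧
      ∀ x ∈ A, (3 : ℝ≥0∞) ^ (-γ) * ∫⁻ y, (edist x y) ^ (-γ) ∂μ ≤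
        ∫⁻ y, (edist x y) ^ (-γ) ∂ν := by
  classical
  -- countable dense subset of A
  haveI : Nonempty ↥A := hne.to_subtype
  haveI : SecondCountableTopology X := UniformSpace.secondCountable_of_separable X
  obtain ⟨D, Dcnt, Ddense⟩ := TopologicalSpace.exists_countable_dense ↥A
  set T : Set X := Subtype.val '' D with hT
  have hTA : T ⊆ A := by rintro x ⟨d, _, rfl⟩; exact d.2
  have hclT : A ⊆ closure T := by
    intro a ha
    have : (⟨a, ha⟩ : ↥A) ∈ closure D := Ddense _
    rw [Topology.IsEmbedding.subtypeVal.closure_eq_preimage_closure_image D] at this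
    exact this
  have hTne : T.Nonempty := by
    rcases hne with ⟨a, ha⟩
    rcases (mem_closure_iff_nhds.1 (hclT ha) Set.univ Filter.univ_mem) with ⟨t, _, ht⟩
    exact ⟨t, ht⟩
  have hinfT : ∀ y : X, Metric.infDist y T = Metric.infDist y A := by
    intro y
    have h1 : Metric.infDist y (closure T) = Metric.infDist y T := Metric.infDist_closure
    have h2 : closure T = A := le_antisymm (hA.closure_subset_iff.2 hTA) hclT
    rw [← h1, h2]
  obtain ⟨u, hu⟩ := (Set.Countable.exists_eq_range (Dcnt.image Subtype.val) hTne)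
  -- the selection predicate
  set p : ℕ → X → Prop := fun n y => dist y (u n) < 2 * Metric.infDist y A ∨ y ∈ A with hp
  have hex : ∀ y, ∃ n, p n y := by
    intro y
    by_cases hy : y ∈ A
    · exact ⟨0, Or.inr hy⟩
    · have hpos : 0 < Metric.infDist y A := (hA.notMem_iff_infDist_pos hne).1 hy
      have : Metric.infDist y T < 2 * Metric.infDist y A := by
        rw [hinfT]; linarith
      rcases (Metric.infDist_lt_iff hTne).1 this with ⟨t, htT, hlt⟩
      rw [hT, hu] at htT
      rcases htT with ⟨n, rfl⟩
      exact ⟨n, Or.inl hlt⟩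
  set f : X → X := fun y => u (Nat.find (hex y)) with hf
  have hfmeas : Measurable f := by
    apply Measurable.find (f := fun n _ => u n) (fun n => measurable_const)
    intro n
    have : {y | p n y} = {y | dist y (u n) < 2 * Metric.infDist y A} ∪ A := by
      ext y; simp [hp, Set.mem_setOf_eq, Set.mem_union]
    rw [this]
    apply MeasurableSet.union _ hA.measurableSet
    have : IsOpen {y | dist y (u n) < 2 * Metric.infDist y A} := by
      apply isOpen_lt
      · exact continuous_id.dist continuous_const
      · exact continuous_const.mul (Metric.continuous_infDist_pt A)
    exact this.measurableSet
  have hfA : ∀ y, f y ∈ A := by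
    intro y
    apply hTA
    rw [hT, hu]
    exact ⟨Nat.find (hex y), rfl⟩
  have hfdist : ∀ y ∉ A, dist y (f y) < 2 * Metric.infDist y A := by
    intro y hy
    rcases Nat.find_spec (hex y) with h | h
    · exact h
    · exact absurd h hy
  -- the measure
  set ν : Measure X := μ.restrict A + (μ.restrict Aᶜ).map f with hν
  have hmapAc : (μ.restrict Aᶜ).map f Aᶜ = 0 := by
    rw [Measure.map_apply hfmeas hA.measurableSet.compl]
    have : f ⁻¹' Aᶜ = ∅ := by
      ext y; simp [hfA y]
    simp [this]
  refine ⟨ν, ?_, ?_, ?_, ?_⟩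
  · constructor
    rw [hν]
    simp only [Measure.add_apply]
    have h1 : μ.restrict A Set.univ ≤ μ Set.univ := Measure.restrict_le_self _
    have h2 : (μ.restrict Aᶜ).map f Set.univ ≤ μ Set.univ := by
      rw [Measure.map_apply hfmeas MeasurableSet.univ]
      exact le_trans (Measure.restrict_le_self _) (le_of_eq rfl)
    exact lt_of_le_of_lt (add_le_add h1 h2) (by simp [ENNReal.add_lt_top, measure_lt_top])
  · rw [hν]
    simp only [Measure.add_apply, hmapAc, add_zero]
    rw [Measure.restrict_apply hA.measurableSet.compl]
    simp
  · rw [hν]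
    simp only [Measure.add_apply]
    rw [Measure.map_apply hfmeas MeasurableSet.univ]
    simp only [Set.preimage_univ]
    rw [Measure.restrict_apply_univ, Measure.restrict_apply_univ]
    rw [← measure_union (disjoint_compl_right) hA.measurableSet.compl]
    simp
  · intro x hx
    have hint : Measurable fun y => (edist x y) ^ (-γ) :=
      (measurable_const.edist measurable_id).pow_const _
    rw [hν]
    rw [lintegral_add_measure, lintegral_map hint hfmeas]
    have hsplit : ∫⁻ y, (edist x y) ^ (-γ) ∂μ
        = (∫⁻ y, (edist x y) ^ (-γ) ∂μ.restrict A) + ∫⁻ y, (edist x y) ^ (-γ) ∂μ.restrict Aᶜ := by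
      rw [← lintegral_add_measure, Measure.restrict_add_restrict_compl hA.measurableSet]
    rw [hsplit, mul_add]
    apply add_le_add
    · calc (3:ℝ≥0∞) ^ (-γ) * ∫⁻ y, (edist x y) ^ (-γ) ∂μ.restrict A
          ≤ 1 * ∫⁻ y, (edist x y) ^ (-γ) ∂μ.restrict A := by
            apply mul_le_mul_left
            exact ENNReal.rpow_le_one_of_one_le_of_neg (by norm_num) (by linarith)
        _ = _ := one_mul _
    · rw [← lintegral_const_mul _ hint]
      apply setLIntegral_mono (hint.comp hfmeas)
      intro y hy
      have hdist : dist x (f y) ≤ 3 * dist x y := by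
        have h1 : dist x (f y) ≤ dist x y + dist y (f y) := dist_triangle _ _ _
        have h2 : dist y (f y) < 2 * Metric.infDist y A := hfdist y hy
        have h3 : Metric.infDist y A ≤ dist y x := Metric.infDist_le_dist_of_mem hx
        rw [dist_comm y x] at h3
        nlinarith
      have hed : edist x (f y) ≤ 3 * edist x y := by
        rw [edist_dist, edist_dist]
        calc ENNReal.ofReal (dist x (f y)) ≤ ENNReal.ofReal (3 * dist x y) :=
              ENNReal.ofReal_le_ofReal hdist
          _ = ENNReal.ofReal 3 * ENNReal.ofReal (dist x y) :=
              ENNReal.ofReal_mul (by norm_num)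
          _ = 3 * ENNReal.ofReal (dist x y) := by norm_num
      exact key_rpow hγ (edist_ne_top x y) hed
end

section
/- Let (X,d) be a separable metric space, γ > 0, G(x,y) = d(x,y)^{-γ}. Let P = ∪_{m∈ℕ} A_m with each A_m closed, and suppose c*(P) = 0 (equivalently, some finite measure μ satisfies Gμ = ∞ on P). Then there exists a finite measure ν supported on P with ‖ν‖ ≤ 1 and Gν = ∞ on P. -/
open MeasureTheory
open scoped ENNReal

-- measurable "sweeping" map onto a closed nonempty set
lemma exists_proj_aux {X : Type*} [MetricSpace X] [TopologicalSpace.SeparableSpace X]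
    [MeasurableSpace X] [BorelSpace X] {C : Set X} (hC : IsClosed C) (hne : C.Nonempty) :
    ∃ f : X → X, Measurable f ∧ (∀ y, f y ∈ C) ∧
      ∀ x ∈ C, ∀ y, edist x (f y) ≤ 3 * edist x y := by
  classical
  haveI := UniformSpace.secondCountable_of_separable X
  haveI : Nonempty ↥C := hne.to_subtype
  obtain ⟨u, hu⟩ : ∃ u : ℕ → ↥C, DenseRange u :=
    ⟨TopologicalSpace.denseSeq ↥C, TopologicalSpace.denseRange_denseSeq ↥C⟩
  set g : ℕ → X := fun n => (u n : X) with hgdef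
  have hgC : ∀ n, g n ∈ C := fun n => (u n).2
  have hg : ∀ x ∈ C, ∀ ε > 0, ∃ n, dist x (g n) < ε := by
    intro x hx ε hε
    rcases Metric.denseRange_iff.1 hu ⟨x, hx⟩ ε hε with ⟨n, hn⟩
    exact ⟨n, by simpa [hgdef, Subtype.dist_eq] using hn⟩
  set p : ℕ → X → Prop := fun n y => y ∈ C ∨ dist y (g n) ≤ 2 * Metric.infDist y C with hpdef
  have hex : ∀ y, ∃ n, p n y := by
    intro y
    by_cases hy : y ∈ C
    · exact ⟨0, Or.inl hy⟩
    · have hpos : 0 < Metric.infDist y C := (hC.notMem_iff_infDist_pos hne).1 hy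
      have h32 : Metric.infDist y C < (3/2) * Metric.infDist y C := by nlinarith
      obtain ⟨a, haC, ha⟩ := (Metric.infDist_lt_iff hne).1 h32
      obtain ⟨n, hn⟩ := hg a haC (Metric.infDist y C / 2) (by positivity)
      refine ⟨n, Or.inr ?_⟩
      have := dist_triangle y a (g n)
      nlinarith
  set F : X → X := fun y => g (Nat.find (hex y)) with hFdef
  have hFmeas : Measurable F := by
    apply Measurable.find (f := fun n (_ : X) => g n) (fun n => measurable_const)
    intro n
    have h1 : IsClosed {y : X | dist y (g n) ≤ 2 * Metric.infDist y C} :=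
      isClosed_le (Continuous.dist continuous_id continuous_const)
        (continuous_const.mul (Metric.continuous_infDist_pt C))
    exact (hC.measurableSet.union h1.measurableSet)
  refine ⟨C.piecewise id F, Measurable.piecewise hC.measurableSet measurable_id hFmeas, ?_, ?_⟩
  · intro y
    by_cases hy : y ∈ C
    · simpa [Set.piecewise_eq_of_mem _ _ _ hy] using hy
    · rw [Set.piecewise_eq_of_notMem _ _ _ hy]
      exact hgC _
  · intro x hx y
    by_cases hy : y ∈ C
    · rw [Set.piecewise_eq_of_mem _ _ _ hy]
      simpa using le_mul_of_one_le_left zero_le (by norm_num : (1:ℝ≥0∞) ≤ 3)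
    · rw [Set.piecewise_eq_of_notMem _ _ _ hy]
      have hspec := Nat.find_spec (hex y)
      have hd : dist y (F y) ≤ 2 * Metric.infDist y C := by
        rcases hspec with h | h
        · exact absurd h hy
        · exact h
      have hinf : Metric.infDist y C ≤ dist y x := Metric.infDist_le_dist_of_mem hx
      have hdist : dist x (F y) ≤ 3 * dist x y := by
        have := dist_triangle x y (F y)
        have hyx : dist y x = dist x y := dist_comm y x
        nlinarith
      calc edist x (F y) = ENNReal.ofReal (dist x (F y)) := edist_dist _ _
        _ ≤ ENNReal.ofReal (3 * dist x y) := ENNReal.ofReal_le_ofReal hdist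
        _ = ENNReal.ofReal 3 * ENNReal.ofReal (dist x y) :=
            ENNReal.ofReal_mul (by norm_num)
        _ = 3 * edist x y := by rw [← edist_dist]; norm_num

theorem stmt_12 {X : Type*} [MetricSpace X] [TopologicalSpace.SeparableSpace X]
    [MeasurableSpace X] [BorelSpace X]
    (γ : ℝ) (hγ : 0 < γ) (A : ℕ → Set X) (hA : ∀ m, IsClosed (A m))
    (P : Set X) (hP : P = ⋃ m, A m)
    (μ : Measure X) [IsFiniteMeasure μ]
    (hμ : ∀ x ∈ P, ∫⁻ y, (edist x y) ^ (-γ) ∂μ = ∞) :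
    ∃ ν : Measure X, IsFiniteMeasure ν ∧ ν Pᶜ = 0 ∧ ν Set.univ ≤ 1 ∧
      ∀ x ∈ P, ∫⁻ y, (edist x y) ^ (-γ) ∂ν = ∞ := by
  classical
  by_cases hPne : P.Nonempty
  swap
  · exact ⟨0, inferInstance, by simp, by simp, fun x hx => absurd ⟨x, hx⟩ hPne⟩
  obtain ⟨x0, hx0⟩ := hPne
  have hμ0 : μ Set.univ ≠ 0 := by
    intro h
    have h0 : μ = 0 := Measure.measure_univ_eq_zero.1 h
    have := hμ x0 hx0
    rw [h0] at this
    simp at this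
  have hμtop : μ Set.univ ≠ ⊤ := measure_ne_top μ _
  have hker : ∀ x : X, Measurable fun z : X => (edist x z) ^ (-γ) := fun x =>
    (ENNReal.continuous_rpow_const.comp (continuous_const.edist continuous_id)).measurable
  have hPmeas : MeasurableSet P := by
    rw [hP]; exact MeasurableSet.iUnion fun m => (hA m).measurableSet
  have key : ∀ m, ∃ ν : Measure X, ν (A m)ᶜ = 0 ∧ ν Set.univ ≤ μ Set.univ ∧
      ∀ x ∈ A m, ∫⁻ y, (edist x y) ^ (-γ) ∂ν = ∞ := by
    intro m
    by_cases hne : (A m).Nonempty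
    · obtain ⟨f, hfm, hfC, hfd⟩ := exists_proj_aux (hA m) hne
      refine ⟨μ.map f, ?_, ?_, ?_⟩
      · rw [Measure.map_apply hfm (hA m).measurableSet.compl]
        have : f ⁻¹' (A m)ᶜ = ∅ := by
          ext y; simp [hfC y]
        rw [this, measure_empty]
      · rw [Measure.map_apply hfm MeasurableSet.univ, Set.preimage_univ]
      · intro x hx
        have hxP : x ∈ P := hP ▸ Set.mem_iUnion.2 ⟨m, hx⟩
        rw [lintegral_map (hker x) hfm]
        have hpt : ∀ y, (3:ℝ≥0∞)^(-γ) * (edist x y)^(-γ) ≤ (edist x (f y))^(-γ) := by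
          intro y
          have h1 : edist x (f y) ≤ 3 * edist x y := hfd x hx y
          have h2 : (3 * edist x y)^(-γ) ≤ (edist x (f y))^(-γ) := by
            rw [ENNReal.rpow_neg, ENNReal.rpow_neg]
            exact ENNReal.inv_le_inv.2 (ENNReal.rpow_le_rpow h1 hγ.le)
          calc (3:ℝ≥0∞)^(-γ) * (edist x y)^(-γ) = (3 * edist x y)^(-γ) :=
                (ENNReal.mul_rpow_of_ne_top (by norm_num) (edist_ne_top x y) _).symm
            _ ≤ (edist x (f y))^(-γ) := h2
        have hle := lintegral_mono (μ := μ) hpt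
        rw [lintegral_const_mul _ (hker x), hμ x hxP] at hle
        have h3 : ((3:ℝ≥0∞)^(-γ)) ≠ 0 :=
          (ENNReal.rpow_pos (by norm_num) (by norm_num)).ne'
        rw [ENNReal.mul_top h3] at hle
        exact top_le_iff.1 hle
    · exact ⟨0, by simp, by simp, fun x hx => absurd ⟨x, hx⟩ hne⟩
  choose ν hν1 hν2 hν3 using key
  set c : ℕ → ℝ≥0∞ := fun m => 2⁻¹ ^ (m+1) * (μ Set.univ)⁻¹ with hcdef
  have hc0 : ∀ m, c m ≠ 0 := fun m =>
    mul_ne_zero (pow_ne_zero _ (by norm_num)) (ENNReal.inv_ne_zero.2 hμtop)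
  have hbound : (Measure.sum (fun m => c m • ν m)) Set.univ ≤ 1 := by
    rw [Measure.sum_apply _ MeasurableSet.univ]
    have hterm : ∀ m, (c m • ν m) Set.univ ≤ 2⁻¹ ^ (m+1) := by
      intro m
      rw [Measure.smul_apply, smul_eq_mul, hcdef]
      calc 2⁻¹ ^ (m+1) * (μ Set.univ)⁻¹ * ν m Set.univ
          ≤ 2⁻¹ ^ (m+1) * (μ Set.univ)⁻¹ * μ Set.univ :=
            mul_le_mul_right (hν2 m) _
        _ = 2⁻¹ ^ (m+1) * ((μ Set.univ)⁻¹ * μ Set.univ) := by ring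
        _ = 2⁻¹ ^ (m+1) := by rw [ENNReal.inv_mul_cancel hμ0 hμtop, mul_one]
    calc ∑' m, (c m • ν m) Set.univ ≤ ∑' m : ℕ, (2⁻¹:ℝ≥0∞) ^ (m+1) :=
          ENNReal.tsum_le_tsum hterm
      _ = (∑' m : ℕ, (2⁻¹:ℝ≥0∞) ^ m) * 2⁻¹ := by
          simp_rw [pow_succ]; exact ENNReal.tsum_mul_right
      _ = 1 := by
          rw [ENNReal.tsum_geometric, ENNReal.one_sub_inv_two, inv_inv]
          exact ENNReal.mul_inv_cancel two_ne_zero ENNReal.ofNat_ne_top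
  refine ⟨Measure.sum (fun m => c m • ν m),
    ⟨lt_of_le_of_lt hbound ENNReal.one_lt_top⟩, ?_, hbound, ?_⟩
  · rw [Measure.sum_apply _ hPmeas.compl]
    have : ∀ m, (c m • ν m) Pᶜ = 0 := by
      intro m
      have hsub : Pᶜ ⊆ (A m)ᶜ := Set.compl_subset_compl.2 (hP ▸ Set.subset_iUnion A m)
      have : ν m Pᶜ = 0 := le_antisymm (le_trans (measure_mono hsub) (hν1 m).le) zero_le
      simp [Measure.smul_apply, this]
    simp [this]
  · intro x hx
    obtain ⟨m, hm⟩ := Set.mem_iUnion.1 (hP ▸ hx)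
    have hle : c m • ν m ≤ Measure.sum (fun m => c m • ν m) := Measure.le_sum _ m
    have h1 : ∫⁻ y, (edist x y) ^ (-γ) ∂(c m • ν m)
        ≤ ∫⁻ y, (edist x y) ^ (-γ) ∂(Measure.sum (fun m => c m • ν m)) :=
      lintegral_mono' hle le_rfl
    rw [lintegral_smul_measure, hν3 m x hm, smul_eq_mul, ENNReal.mul_top (hc0 m)] at h1
    exact top_le_iff.1 h1
end
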